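/- The linear map Υ : ⨁_{n∈ℕ} (Vₙ* ⊗ Vₙ) → ℂ[SL(2,ℂ)] determined on each summand by φ ⊗ v ↦ (x ↦ φ(ρₙ(x)v)) is a linear bijection onto ℂ[SL(2,ℂ)]. Moreover Υ is SL(2,ℂ)-equivariant: for all g ∈ SL(2,ℂ), φ ∈ Vₙ*, v ∈ Vₙ and x ∈ SL(2,ℂ), Υ((φ∘ρₙ(g)⁻¹) ⊗ ρₙ(g)v)(x) = Υ(φ ⊗ v)(g⁻¹ x g). -/

import Mathlib

open Matrix Finset TensorProduct DirectSum

noncomputable section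

abbrev SL2 : Type := Matrix.SpecialLinearGroup (Fin 2) ℂ

def IsRegularFn (f : SL2 → ℂ) : Prop :=
  ∃ P : MvPolynomial (Fin 4) ℂ,
    ∀ A : SL2, f A = MvPolynomial.eval ![A.1 0 0, A.1 0 1, A.1 1 0, A.1 1 1] P

def rhoFun (n : ℕ) (g : SL2) (l k : ℕ) : ℂ :=
  MvPolynomial.coeff (Finsupp.single (0 : Fin 2) l + Finsupp.single (1 : Fin 2) (n - l))
    (MvPolynomial.aeval
      ![MvPolynomial.C (g.1 0 0) * MvPolynomial.X (0 : Fin 2) +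
          MvPolynomial.C (g.1 1 0) * MvPolynomial.X 1,
        MvPolynomial.C (g.1 0 1) * MvPolynomial.X 0 +
          MvPolynomial.C (g.1 1 1) * MvPolynomial.X 1]
      ((MvPolynomial.X (0 : Fin 2) : MvPolynomial (Fin 2) ℂ) ^ k * MvPolynomial.X 1 ^ (n - k)))

open MvPolynomial

set_option synthInstance.maxHeartbeats 1000000
set_option maxHeartbeats 1000000

abbrev MvP2 := MvPolynomial (Fin 2) ℂ

def mon2 (n m : ℕ) : Fin 2 →₀ ℕ := Finsupp.single 0 m + Finsupp.single 1 (n - m)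

lemma mon2_apply0 (n m : ℕ) : mon2 n m 0 = m := by simp [mon2]
lemma mon2_apply1 (n m : ℕ) : mon2 n m 1 = n - m := by simp [mon2]

lemma mon2_degree (n m : ℕ) (h : m ≤ n) : (mon2 n m).degree = n := by
  rw [Finsupp.degree_eq_weight_one]
  simp [Finsupp.weight_apply, Finsupp.sum_fintype, Fin.sum_univ_two, mon2_apply0, mon2_apply1]
  omega

lemma eq_mon2 (d : Fin 2 →₀ ℕ) (n : ℕ) (h : d.degree = n) : d = mon2 n (d 0) := by
  have h2 : d 0 + d 1 = n := by
    rw [← h, Finsupp.degree_eq_weight_one]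
    simp [Finsupp.weight_apply, Finsupp.sum_fintype, Fin.sum_univ_two]
  ext i
  fin_cases i
  · simpa using (mon2_apply0 n (d 0)).symm
  · show d 1 = mon2 n (d 0) 1
    rw [mon2_apply1]; omega

lemma hom_expand {p : MvP2} {n : ℕ} (hp : p.IsHomogeneous n) :
    p = ∑ m ∈ range (n+1), MvPolynomial.monomial (mon2 n m) (MvPolynomial.coeff (mon2 n m) p) := by
  apply MvPolynomial.ext; intro d
  rw [MvPolynomial.coeff_sum]
  simp only [MvPolynomial.coeff_monomial]
  by_cases hd : d.degree = n
  · have hd0 : d 0 ≤ n := by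
      rw [← hd, Finsupp.degree_eq_weight_one]
      simp [Finsupp.weight_apply, Finsupp.sum_fintype, Fin.sum_univ_two]
    rw [Finset.sum_eq_single (d 0)]
    · rw [if_pos (eq_mon2 d n hd).symm, ← eq_mon2 d n hd]
    · intro m hm hne
      rw [if_neg]
      intro hcontra
      exact hne (by rw [← hcontra, mon2_apply0])
    · intro hmem
      exact absurd (Finset.mem_range.2 (Nat.lt_succ_of_le hd0)) hmem
  · rw [hp.coeff_eq_zero hd]
    refine (Finset.sum_eq_zero ?_).symm
    intro m hm
    rw [if_neg]
    intro hcontra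
    exact hd (by rw [← hcontra, mon2_degree n m (Nat.lt_succ_iff.1 (Finset.mem_range.1 hm))])


def sigmaMap (g : SL2) : MvP2 →ₐ[ℂ] MvP2 :=
  MvPolynomial.aeval
      ![MvPolynomial.C (g.1 0 0) * MvPolynomial.X (0 : Fin 2) +
          MvPolynomial.C (g.1 1 0) * MvPolynomial.X 1,
        MvPolynomial.C (g.1 0 1) * MvPolynomial.X 0 +
          MvPolynomial.C (g.1 1 1) * MvPolynomial.X 1]

lemma rhoFun_eq (n : ℕ) (g : SL2) (l k : ℕ) :
    rhoFun n g l k = MvPolynomial.coeff (mon2 n l) (sigmaMap g (X 0 ^ k * X 1 ^ (n - k))) := rfl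

lemma sigmaMap_X0 (g : SL2) : sigmaMap g (X 0) = C (g.1 0 0) * X 0 + C (g.1 1 0) * X 1 := by
  simp [sigmaMap]

lemma sigmaMap_X1 (g : SL2) : sigmaMap g (X 1) = C (g.1 0 1) * X 0 + C (g.1 1 1) * X 1 := by
  simp [sigmaMap]

lemma sigmaMap_mul (x y : SL2) : sigmaMap (x * y) = (sigmaMap x).comp (sigmaMap y) := by
  apply MvPolynomial.algHom_ext
  intro i
  have hco : (x * y).1 = x.1 * y.1 := rfl
  fin_cases i <;>
    simp [sigmaMap_X0, sigmaMap_X1, AlgHom.comp_apply, hco, Matrix.mul_apply,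
      Fin.sum_univ_two, map_add, _root_.map_mul, MvPolynomial.aeval_C] <;> ring

lemma sigmaMap_one : sigmaMap (1 : SL2) = AlgHom.id ℂ MvP2 := by
  apply MvPolynomial.algHom_ext
  intro i
  fin_cases i <;> simp [sigmaMap_X0, sigmaMap_X1]

lemma sigma_basis_eq (n k : ℕ) (g : SL2) :
    sigmaMap g (X 0 ^ k * X 1 ^ (n - k)) =
      (C (g.1 0 0) * X 0 + C (g.1 1 0) * X 1) ^ k *
        (C (g.1 0 1) * X 0 + C (g.1 1 1) * X 1) ^ (n - k) := by
  rw [_root_.map_mul, map_pow, map_pow, sigmaMap_X0, sigmaMap_X1]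

lemma linform_hom (a b : ℂ) : (C a * X 0 + C b * X 1 : MvP2).IsHomogeneous 1 := by
  apply MvPolynomial.IsHomogeneous.add
  · simpa using (MvPolynomial.isHomogeneous_C (Fin 2) a).mul (MvPolynomial.isHomogeneous_X ℂ 0)
  · simpa using (MvPolynomial.isHomogeneous_C (Fin 2) b).mul (MvPolynomial.isHomogeneous_X ℂ 1)

lemma sigma_basis_hom (n k : ℕ) (hk : k ≤ n) (g : SL2) :
    (sigmaMap g (X 0 ^ k * X 1 ^ (n - k))).IsHomogeneous n := by
  rw [sigma_basis_eq]
  have := ((linform_hom (g.1 0 0) (g.1 1 0)).pow k).mul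
    ((linform_hom (g.1 0 1) (g.1 1 1)).pow (n - k))
  simpa [Nat.one_mul, Nat.add_sub_cancel' hk] using this

lemma sigma_basis_expand (n k : ℕ) (hk : k ≤ n) (g : SL2) :
    sigmaMap g (X 0 ^ k * X 1 ^ (n - k)) =
      ∑ m ∈ range (n + 1), MvPolynomial.monomial (mon2 n m) (rhoFun n g m k) := by
  have h := hom_expand (sigma_basis_hom n k hk g)
  simpa only [← rhoFun_eq] using h

lemma monomial_mon2 (n m : ℕ) (c : ℂ) :
    MvPolynomial.monomial (mon2 n m) c = C c * (X 0 ^ m * X 1 ^ (n - m)) := by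
  rw [MvPolynomial.monomial_eq]
  congr 1
  rw [Finsupp.prod_fintype _ _ (fun i => pow_zero _), Fin.prod_univ_two, mon2_apply0, mon2_apply1]

lemma rhoFun_mul (n : ℕ) (x y : SL2) (l k : ℕ) (hl : l ≤ n) (hk : k ≤ n) :
    rhoFun n (x * y) l k = ∑ m ∈ range (n + 1), rhoFun n x l m * rhoFun n y m k := by
  rw [rhoFun_eq, sigmaMap_mul, AlgHom.comp_apply, sigma_basis_expand n k hk y, map_sum]
  rw [MvPolynomial.coeff_sum]
  apply Finset.sum_congr rfl
  intro m hm
  have hC : (sigmaMap x) (C (rhoFun n y m k)) = C (rhoFun n y m k) := by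
    simp [sigmaMap, MvPolynomial.aeval_C, MvPolynomial.algebraMap_eq]
  rw [monomial_mon2, _root_.map_mul, hC, MvPolynomial.coeff_C_mul, ← rhoFun_eq, mul_comm]

def rhoMat (n : ℕ) (g : SL2) : Matrix (Fin (n+1)) (Fin (n+1)) ℂ :=
  Matrix.of fun l k => rhoFun n g (l : ℕ) (k : ℕ)

lemma rhoMat_mul (n : ℕ) (x y : SL2) : rhoMat n (x * y) = rhoMat n x * rhoMat n y := by
  ext l k
  rw [Matrix.mul_apply]
  show rhoFun n (x * y) l k = _
  rw [rhoFun_mul n x y l k (Nat.lt_succ_iff.1 l.isLt) (Nat.lt_succ_iff.1 k.isLt)]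
  rw [Finset.sum_range fun m => rhoFun n x l m * rhoFun n y m k]
  rfl

lemma basis_eq_monomial (n k : ℕ) (hk : k ≤ n) :
    (X 0 ^ k * X 1 ^ (n - k) : MvP2) = MvPolynomial.monomial (mon2 n k) 1 := by
  rw [monomial_mon2, _root_.map_one, one_mul]

lemma rhoFun_one (n l k : ℕ) (hl : l ≤ n) (hk : k ≤ n) :
    rhoFun n 1 l k = if l = k then 1 else 0 := by
  rw [rhoFun_eq, sigmaMap_one, AlgHom.id_apply, basis_eq_monomial n k hk,
    MvPolynomial.coeff_monomial]
  by_cases h : l = k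
  · rw [if_pos h, if_pos (by rw [h])]
  · rw [if_neg h, if_neg]
    intro hc
    exact h (by rw [← mon2_apply0 n l, ← mon2_apply0 n k, hc])

lemma rhoMat_one (n : ℕ) : rhoMat n 1 = 1 := by
  ext l k
  show rhoFun n 1 l k = _
  rw [rhoFun_one n l k (Nat.lt_succ_iff.1 l.isLt) (Nat.lt_succ_iff.1 k.isLt)]
  by_cases h : l = k
  · simp [h, Matrix.one_apply]
  · rw [if_neg (fun hc => h (Fin.ext hc)), Matrix.one_apply_ne (fun hc => h hc)]

lemma rhoMat_inv (n : ℕ) (g : SL2) : (rhoMat n g)⁻¹ = rhoMat n g⁻¹ := by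
  apply Matrix.inv_eq_right_inv
  rw [← rhoMat_mul, mul_inv_cancel, rhoMat_one]

def UpsilonAux (n : ℕ) :
    ((Fin (n+1) → ℂ) →ₗ[ℂ] ℂ) →ₗ[ℂ] ((Fin (n+1) → ℂ) →ₗ[ℂ] (SL2 → ℂ)) where
  toFun φ :=
    { toFun := fun v => fun x : SL2 => φ ((rhoMat n x).mulVec v)
      map_add' := fun v w => funext fun x => by simp [Matrix.mulVec_add]
      map_smul' := fun c v => funext fun x => by simp [Matrix.mulVec_smul] }
  map_add' φ ψ := LinearMap.ext fun v => funext fun x => by simp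
  map_smul' c φ := LinearMap.ext fun v => funext fun x => by simp

def Upsilon : (⨁ n : ℕ, (((Fin (n+1) → ℂ) →ₗ[ℂ] ℂ) ⊗[ℂ] (Fin (n+1) → ℂ))) →ₗ[ℂ] (SL2 → ℂ) :=
  DirectSum.toModule ℂ ℕ (SL2 → ℂ) fun n => TensorProduct.lift (UpsilonAux n)

lemma Upsilon_of_tmul (n : ℕ) (φ : (Fin (n+1) → ℂ) →ₗ[ℂ] ℂ) (v : Fin (n+1) → ℂ) (x : SL2) :
    Upsilon (DirectSum.of (fun m => ((Fin (m+1) → ℂ) →ₗ[ℂ] ℂ) ⊗[ℂ] (Fin (m+1) → ℂ)) n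
      (φ ⊗ₜ[ℂ] v)) x = φ ((rhoMat n x).mulVec v) := by
  rw [Upsilon, ← DirectSum.lof_eq_of ℂ, DirectSum.toModule_lof]
  rfl

lemma equivariance (n : ℕ) (g : SL2) (φ : (Fin (n+1) → ℂ) →ₗ[ℂ] ℂ) (v : Fin (n+1) → ℂ) (x : SL2) :
    Upsilon (DirectSum.of (fun m => ((Fin (m+1) → ℂ) →ₗ[ℂ] ℂ) ⊗[ℂ] (Fin (m+1) → ℂ)) n
        ((φ.comp (Matrix.mulVecLin (rhoMat n g)⁻¹)) ⊗ₜ[ℂ] ((rhoMat n g).mulVec v))) x =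
      Upsilon (DirectSum.of (fun m => ((Fin (m+1) → ℂ) →ₗ[ℂ] ℂ) ⊗[ℂ] (Fin (m+1) → ℂ)) n
        (φ ⊗ₜ[ℂ] v)) (g⁻¹ * x * g) := by
  rw [Upsilon_of_tmul, Upsilon_of_tmul]
  rw [LinearMap.comp_apply, Matrix.mulVecLin_apply]
  rw [Matrix.mulVec_mulVec, Matrix.mulVec_mulVec, rhoMat_inv, rhoMat_mul, rhoMat_mul,
    mul_assoc]

lemma linform_pow (a b : ℂ) (k : ℕ) :
    (C a * X 0 + C b * X 1 : MvP2) ^ k =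
      ∑ i ∈ range (k+1),
        MvPolynomial.monomial (mon2 k i) ((k.choose i : ℂ) * a ^ i * b ^ (k - i)) := by
  rw [add_pow]
  refine Finset.sum_congr rfl fun i hi => ?_
  rw [monomial_mon2]
  have hcast : ((k.choose i : ℕ) : MvP2) = C ((k.choose i : ℂ)) := by simp
  rw [hcast, mul_pow, mul_pow, ← map_pow C a, ← map_pow C b]
  simp only [_root_.map_mul]
  ring

lemma mon2_add_eq (n l k i j : ℕ) (hik : i ≤ k) (hjk : j ≤ n - k) (hkn : k ≤ n) (hl : l ≤ n) :
    (mon2 k i + mon2 (n - k) j = mon2 n l) ↔ i + j = l := by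
  constructor
  · intro h
    have h0 := congrFun (congrArg (fun (f : Fin 2 →₀ ℕ) => (f : Fin 2 → ℕ)) h) 0
    simpa [Finsupp.add_apply, mon2_apply0] using h0
  · intro h
    ext z
    fin_cases z
    · show (mon2 k i + mon2 (n-k) j) 0 = mon2 n l 0
      simp [Finsupp.add_apply, mon2_apply0, h]
    · show (mon2 k i + mon2 (n-k) j) 1 = mon2 n l 1
      simp only [Finsupp.add_apply, mon2_apply1]
      omega

/-- The summand in the explicit formula for `rhoFun`. -/
def formF (n l k : ℕ) (a b c d : ℂ) (i : ℕ) : ℂ :=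
  (k.choose i : ℂ) * a ^ i * b ^ (k - i) *
    (((n-k).choose (l-i) : ℂ) * c ^ (l-i) * d ^ (n - k - (l-i)))

def formH (n l k : ℕ) (a b c d : ℂ) (i : ℕ) : ℂ :=
  if i ≤ l then formF n l k a b c d i else 0

lemma formF_eq_zero_of_lt {k i : ℕ} (h : k < i) (n l : ℕ) (a b c d : ℂ) :
    formF n l k a b c d i = 0 := by
  rw [formF, Nat.choose_eq_zero_of_lt h]
  push_cast
  ring

lemma formF_eq_zero_of_lt' {n l k i : ℕ} (h : n - k < l - i) (a b c d : ℂ) :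
    formF n l k a b c d i = 0 := by
  rw [formF, Nat.choose_eq_zero_of_lt h]
  push_cast
  ring

lemma rhoFun_double (n l k : ℕ) (hl : l ≤ n) (hk : k ≤ n) (g : SL2) :
    rhoFun n g l k =
      ∑ i ∈ range (k+1), ∑ j ∈ range (n-k+1),
        if i + j = l then
          (k.choose i : ℂ) * g.1 0 0 ^ i * g.1 1 0 ^ (k - i) *
            (((n-k).choose j : ℂ) * g.1 0 1 ^ j * g.1 1 1 ^ (n - k - j))
        else 0 := by
  rw [rhoFun_eq, sigma_basis_eq, linform_pow, linform_pow, Finset.sum_mul_sum]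
  rw [MvPolynomial.coeff_sum]
  refine Finset.sum_congr rfl fun i hi => ?_
  rw [MvPolynomial.coeff_sum]
  refine Finset.sum_congr rfl fun j hj => ?_
  rw [MvPolynomial.monomial_mul, MvPolynomial.coeff_monomial]
  have hik : i ≤ k := Nat.lt_succ_iff.1 (Finset.mem_range.1 hi)
  have hjk : j ≤ n - k := Nat.lt_succ_iff.1 (Finset.mem_range.1 hj)
  rw [if_congr (mon2_add_eq n l k i j hik hjk hk hl) rfl rfl]

lemma rhoFun_formula (n l k : ℕ) (hl : l ≤ n) (hk : k ≤ n) (g : SL2) :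
    rhoFun n g l k =
      ∑ i ∈ range (l+1), formF n l k (g.1 0 0) (g.1 1 0) (g.1 0 1) (g.1 1 1) i := by
  rw [rhoFun_double n l k hl hk g]
  set a := g.1 0 0 with ha; set b := g.1 1 0 with hb
  set c := g.1 0 1 with hc; set d := g.1 1 1 with hd
  have inner : ∀ i ∈ range (k+1),
      (∑ j ∈ range (n-k+1), if i + j = l then
          (k.choose i : ℂ) * a ^ i * b ^ (k - i) *
            (((n-k).choose j : ℂ) * c ^ j * d ^ (n - k - j)) else 0) =
        formH n l k a b c d i := by
    intro i hi
    by_cases hil : i ≤ l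
    · have hstep : ∀ j ∈ range (n-k+1), (if i + j = l then
          (k.choose i : ℂ) * a ^ i * b ^ (k - i) *
            (((n-k).choose j : ℂ) * c ^ j * d ^ (n - k - j)) else 0) =
          (if j = l - i then (k.choose i : ℂ) * a ^ i * b ^ (k - i) *
            (((n-k).choose j : ℂ) * c ^ j * d ^ (n - k - j)) else 0) := by
        intro j _
        exact if_congr (by omega) rfl rfl
      rw [Finset.sum_congr rfl hstep, Finset.sum_ite_eq' (range (n-k+1)) (l-i)]
      by_cases hmem : l - i ≤ n - k
      · rw [if_pos (Finset.mem_range.2 (Nat.lt_succ_of_le hmem)), formH, if_pos hil, formF]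
      · rw [if_neg (fun hcp => hmem (Nat.lt_succ_iff.1 (Finset.mem_range.1 hcp))), formH,
          if_pos hil, formF_eq_zero_of_lt' (Nat.lt_of_not_le hmem)]
    · rw [formH, if_neg hil]
      refine Finset.sum_eq_zero fun j _ => if_neg (by omega)
  rw [Finset.sum_congr rfl inner]
  have hpad1 : ∑ i ∈ range (k+1), formH n l k a b c d i
      = ∑ i ∈ range (n+1), formH n l k a b c d i := by
    refine Finset.sum_subset (Finset.range_subset_range.2 (by omega)) ?_
    intro i _ hi2
    have hik : k < i := by simp only [Finset.mem_range] at hi2; omega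
    rw [formH]
    by_cases hil : i ≤ l
    · rw [if_pos hil, formF_eq_zero_of_lt hik]
    · exact if_neg hil
  have hpad2 : ∑ i ∈ range (l+1), formF n l k a b c d i
      = ∑ i ∈ range (n+1), formH n l k a b c d i := by
    have hstep : ∀ i ∈ range (l+1), formF n l k a b c d i = formH n l k a b c d i := by
      intro i hi
      rw [formH, if_pos (Nat.lt_succ_iff.1 (Finset.mem_range.1 hi))]
    rw [Finset.sum_congr rfl hstep]
    refine Finset.sum_subset (Finset.range_subset_range.2 (by omega)) ?_
    intro i _ hi2
    rw [formH, if_neg (by simp only [Finset.mem_range] at hi2; omega)]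
  rw [hpad1, ← hpad2]

def regSub : Submodule ℂ (SL2 → ℂ) where
  carrier := {f | IsRegularFn f}
  add_mem' := by
    rintro f g ⟨P, hP⟩ ⟨Q, hQ⟩
    exact ⟨P + Q, fun A => by simp [hP A, hQ A]⟩
  zero_mem' := ⟨0, fun A => by simp⟩
  smul_mem' := by
    rintro c f ⟨P, hP⟩
    exact ⟨C c * P, fun A => by simp [hP A]⟩

def Mfun (n l k : ℕ) : SL2 → ℂ := fun x => rhoFun n x l k

def mono (p q r s : ℕ) : SL2 → ℂ := fun g => g.1 0 0 ^ p * g.1 1 0 ^ q * g.1 0 1 ^ r * g.1 1 1 ^ s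

lemma Mfun_regular (n l k : ℕ) (hl : l ≤ n) (hk : k ≤ n) : IsRegularFn (Mfun n l k) := by
  refine ⟨∑ i ∈ range (l+1),
    C ((k.choose i : ℂ) * ((n-k).choose (l-i) : ℂ)) *
      (X 0 ^ i * X 2 ^ (k - i) * X 1 ^ (l-i) * X 3 ^ (n - k - (l-i))), fun A => ?_⟩
  rw [Mfun, rhoFun_formula n l k hl hk A, map_sum]
  refine Finset.sum_congr rfl fun i hi => ?_
  simp only [formF, _root_.map_mul, MvPolynomial.eval_C, MvPolynomial.eval_pow,
    MvPolynomial.eval_X]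
  simp only [Matrix.cons_val_zero, Matrix.cons_val_one, Matrix.head_cons,
    Matrix.cons_val_two, Matrix.tail_cons, Matrix.cons_val_three, Matrix.head_fin_const]
  ring

lemma Upsilon_mem_reg (w : ⨁ n : ℕ, (((Fin (n+1) → ℂ) →ₗ[ℂ] ℂ) ⊗[ℂ] (Fin (n+1) → ℂ))) :
    Upsilon w ∈ regSub := by
  induction w using DirectSum.induction_on with
  | zero => rw [map_zero]; exact regSub.zero_mem
  | of n t =>
    induction t with
    | zero => rw [map_zero, map_zero]; exact regSub.zero_mem
    | tmul φ v =>
      have hfun : Upsilon (DirectSum.of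
          (fun m => ((Fin (m+1) → ℂ) →ₗ[ℂ] ℂ) ⊗[ℂ] (Fin (m+1) → ℂ)) n (φ ⊗ₜ[ℂ] v)) =
          ∑ l : Fin (n+1), ∑ k : Fin (n+1),
            (φ (fun j => if l = j then 1 else 0) * v k) • Mfun n l k := by
        funext x
        rw [Upsilon_of_tmul, LinearMap.pi_apply_eq_sum_univ φ]
        simp only [Finset.sum_apply, Pi.smul_apply, smul_eq_mul, Mfun]
        refine Finset.sum_congr rfl fun l _ => ?_
        have : ((rhoMat n x).mulVec v) l = ∑ k : Fin (n+1), rhoFun n x l k * v k := by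
          simp [Matrix.mulVec, dotProduct, rhoMat]
        rw [this, Finset.sum_mul]
        refine Finset.sum_congr rfl fun k _ => ?_
        ring
      rw [hfun]
      refine Submodule.sum_mem _ fun l _ => Submodule.sum_mem _ fun k _ => ?_
      exact Submodule.smul_mem _ _ (Mfun_regular n l k (Nat.lt_succ_iff.1 l.isLt)
        (Nat.lt_succ_iff.1 k.isLt))
    | add t1 t2 h1 h2 => rw [map_add, map_add]; exact regSub.add_mem h1 h2
  | add w1 w2 h1 h2 => rw [map_add]; exact regSub.add_mem h1 h2

def Rng : Submodule ℂ (SL2 → ℂ) := LinearMap.range Upsilon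

lemma Mfun_mem_Rng (n l k : ℕ) (hl : l ≤ n) (hk : k ≤ n) : Mfun n l k ∈ Rng := by
  refine ⟨DirectSum.of (fun m => ((Fin (m+1) → ℂ) →ₗ[ℂ] ℂ) ⊗[ℂ] (Fin (m+1) → ℂ)) n
    ((LinearMap.proj (⟨l, Nat.lt_succ_of_le hl⟩ : Fin (n+1))) ⊗ₜ[ℂ]
      (Pi.single (⟨k, Nat.lt_succ_of_le hk⟩ : Fin (n+1)) 1)), ?_⟩
  funext x
  rw [Upsilon_of_tmul]
  show ((rhoMat n x).mulVec (Pi.single _ 1)) _ = _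
  rw [Matrix.mulVec_single]
  show rhoMat n x _ _ * 1 = _
  rw [mul_one]
  rfl

lemma det_rel (g : SL2) : g.1 1 0 * g.1 0 1 = g.1 0 0 * g.1 1 1 - 1 := by
  have hdet : g.1.det = 1 := g.2
  rw [Matrix.det_fin_two] at hdet
  linear_combination -hdet

lemma mono_rel (p q r s : ℕ) :
    mono p (q+1) (r+1) s = mono (p+1) q r (s+1) - mono p q r s := by
  funext g
  show (_ : ℂ) = (_ : ℂ) - _
  simp only [mono]
  have h := det_rel g
  linear_combination (g.1 0 0 ^ p * g.1 1 0 ^ q * g.1 0 1 ^ r * g.1 1 1 ^ s) * h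

lemma mono_congr {p q r s p' q' r' s' : ℕ} (h1 : p = p') (h2 : q = q') (h3 : r = r')
    (h4 : s = s') : mono p q r s = mono p' q' r' s' := by
  rw [h1, h2, h3, h4]

lemma reduce (N : ℕ) (HIH : ∀ p q r s, p+q+r+s ≤ N → mono p q r s ∈ Rng) :
    ∀ t p q r s, t ≤ q → t ≤ r → p+q+r+s ≤ N + 2 →
      mono p q r s - mono (p+t) (q-t) (r-t) (s+t) ∈ Rng := by
  intro t
  induction t with
  | zero =>
    intro p q r s _ _ _
    simp only [Nat.add_zero, Nat.sub_zero, sub_self]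
    exact Rng.zero_mem
  | succ t IH =>
    intro p q r s hq hr hd
    have hq1 : 1 ≤ q := le_trans (Nat.le_add_left 1 t) hq
    have hr1 : 1 ≤ r := le_trans (Nat.le_add_left 1 t) hr
    have e1 : mono p q r s - mono (p+1) (q-1) (r-1) (s+1) ∈ Rng := by
      have hrel := mono_rel p (q-1) (r-1) s
      rw [show q - 1 + 1 = q by omega, show r - 1 + 1 = r by omega] at hrel
      have : mono p q r s - mono (p+1) (q-1) (r-1) (s+1) = - mono p (q-1) (r-1) s := by
        rw [hrel]; ring
      rw [this]
      exact Rng.neg_mem (HIH p (q-1) (r-1) s (by omega))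
    have e2 : mono (p+1) (q-1) (r-1) (s+1) -
        mono ((p+1)+t) ((q-1)-t) ((r-1)-t) ((s+1)+t) ∈ Rng :=
      IH (p+1) (q-1) (r-1) (s+1) (by omega) (by omega) (by omega)
    have := Rng.add_mem e1 e2
    rw [sub_add_sub_cancel] at this
    have heq : mono ((p+1)+t) ((q-1)-t) ((r-1)-t) ((s+1)+t)
        = mono (p+(t+1)) (q-(t+1)) (r-(t+1)) (s+(t+1)) :=
      mono_congr (by omega) (by omega) (by omega) (by omega)
    rwa [heq] at this

lemma Mfun_expand (n l k : ℕ) (hl : l ≤ n) (hk : k ≤ n) :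
    Mfun n l k = ∑ i ∈ range (l+1),
      ((k.choose i : ℂ) * ((n-k).choose (l-i) : ℂ)) •
        mono i (k-i) (l-i) (n - k - (l-i)) := by
  funext g
  rw [Mfun, rhoFun_formula n l k hl hk g]
  rw [Finset.sum_apply]
  refine Finset.sum_congr rfl fun i hi => ?_
  simp only [Pi.smul_apply, smul_eq_mul, formF, mono]
  ring

lemma vandermonde_sum (n l k : ℕ) (hk : k ≤ n) :
    ∑ i ∈ range (l+1), ((k.choose i : ℂ) * ((n-k).choose (l-i) : ℂ)) = (n.choose l : ℂ) := by
  have h := Nat.add_choose_eq k (n-k) l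
  rw [Nat.add_sub_cancel' hk] at h
  rw [Finset.Nat.sum_antidiagonal_eq_sum_range_succ_mk] at h
  rw [h]
  push_cast
  rfl

lemma min0_case (N : ℕ) (HIH : ∀ p q r s, p+q+r+s ≤ N → mono p q r s ∈ Rng)
    (p q r s : ℕ) (h0 : q = 0 ∨ r = 0) (hd : p+q+r+s ≤ N+2) : mono p q r s ∈ Rng := by
  obtain ⟨n, hn⟩ : ∃ n, n = p+q+r+s := ⟨_, rfl⟩
  obtain ⟨k, hkdef⟩ : ∃ k, k = p+q := ⟨_, rfl⟩
  obtain ⟨l, hldef⟩ : ∃ l, l = p+r := ⟨_, rfl⟩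
  have hk : k ≤ n := by omega
  have hl : l ≤ n := by omega
  have hMf := Mfun_mem_Rng n l k hl hk
  rw [Mfun_expand n l k hl hk] at hMf
  have key : ∀ i ∈ range (l+1),
      ((k.choose i : ℂ) * ((n-k).choose (l-i) : ℂ)) • mono i (k-i) (l-i) (n - k - (l-i)) -
        ((k.choose i : ℂ) * ((n-k).choose (l-i) : ℂ)) • mono p q r s ∈ Rng := by
    intro i hi
    have hil : i ≤ l := Nat.lt_succ_iff.1 (Finset.mem_range.1 hi)
    by_cases hip : i ≤ p ∧ l - i ≤ n - k
    · obtain ⟨hip, his⟩ := hip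
      have hred := reduce N HIH (p - i) i (k-i) (l-i) (n - k - (l-i))
        (by omega) (by omega) (by omega)
      have heq : mono (i+(p-i)) ((k-i)-(p-i)) ((l-i)-(p-i)) ((n - k - (l-i))+(p-i))
          = mono p q r s := mono_congr (by omega) (by omega) (by omega) (by omega)
      rw [heq] at hred
      rw [← smul_sub]
      exact Rng.smul_mem _ hred
    · have hzero : (k.choose i : ℂ) * ((n-k).choose (l-i) : ℂ) = 0 := by
        rcases Nat.lt_or_ge p i with hcase | hcase
        · have hch : k.choose i = 0 := by
            apply Nat.choose_eq_zero_of_lt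
            rcases h0 with h0 | h0 <;> omega
          rw [hch]; push_cast; ring
        · have hch : (n-k).choose (l-i) = 0 := by
            apply Nat.choose_eq_zero_of_lt
            omega
          rw [hch]; push_cast; ring
      rw [hzero]
      simp only [zero_smul, sub_self]
      exact Rng.zero_mem
  have hsum : (∑ i ∈ range (l+1), ((k.choose i : ℂ) * ((n-k).choose (l-i) : ℂ))) • mono p q r s
      ∈ Rng := by
    have hdiff := Submodule.sum_mem Rng key
    have := Rng.sub_mem hMf hdiff
    rw [Finset.sum_sub_distrib] at this
    simp only [sub_sub_cancel] at this
    rwa [← Finset.sum_smul] at this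
  rw [vandermonde_sum n l k hk] at hsum
  have hnz : (n.choose l : ℂ) ≠ 0 := Nat.cast_ne_zero.2 (Nat.choose_pos hl).ne'
  have := Rng.smul_mem ((n.choose l : ℂ)⁻¹) hsum
  rwa [smul_smul, inv_mul_cancel₀ hnz, one_smul] at this

lemma mono_mem_Rng : ∀ N p q r s, p+q+r+s ≤ N → mono p q r s ∈ Rng := by
  intro N
  induction N with
  | zero =>
    intro p q r s h
    have hp : p = 0 := by omega
    have hq : q = 0 := by omega
    have hr : r = 0 := by omega
    have hs : s = 0 := by omega
    subst hp; subst hq; subst hr; subst hs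
    have : mono 0 0 0 0 = Mfun 0 0 0 := by
      funext g
      rw [Mfun, rhoFun_formula 0 0 0 le_rfl le_rfl]
      simp [mono, formF]
    rw [this]
    exact Mfun_mem_Rng 0 0 0 le_rfl le_rfl
  | succ N IH =>
    intro p q r s h
    by_cases hle : p+q+r+s ≤ N
    · exact IH p q r s hle
    · obtain ⟨t, ht⟩ : ∃ t, t = min q r := ⟨_, rfl⟩
      have hred := reduce N IH t p q r s (by omega) (by omega) (by omega)
      have hmin : mono (p+t) (q-t) (r-t) (s+t) ∈ Rng := by
        apply min0_case N IH (p+t) (q-t) (r-t) (s+t) (by omega) (by omega)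
      have := Rng.add_mem hred hmin
      rwa [sub_add_cancel] at this

lemma regular_mem_Rng (f : SL2 → ℂ) (hf : IsRegularFn f) : f ∈ Rng := by
  obtain ⟨P, hP⟩ := hf
  have hfeq : f = ∑ d ∈ P.support,
      (MvPolynomial.coeff d P) • mono (d 0) (d 2) (d 1) (d 3) := by
    funext A
    rw [hP A, MvPolynomial.eval_eq', Finset.sum_apply]
    refine Finset.sum_congr rfl fun d hd => ?_
    simp only [Pi.smul_apply, smul_eq_mul, mono, Fin.prod_univ_four]
    simp only [Matrix.cons_val_zero, Matrix.cons_val_one, Matrix.head_cons,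
      Matrix.cons_val_two, Matrix.tail_cons, Matrix.cons_val_three, Matrix.head_fin_const]
    ring
  rw [hfeq]
  exact Submodule.sum_mem _ fun d _ => Submodule.smul_mem _ _
    (mono_mem_Rng (d 0 + d 2 + d 1 + d 3) (d 0) (d 2) (d 1) (d 3) le_rfl)

lemma range_Upsilon_eq : Set.range ⇑Upsilon = {f : SL2 → ℂ | IsRegularFn f} := by
  ext f
  constructor
  · rintro ⟨w, rfl⟩
    exact Upsilon_mem_reg w
  · intro hf
    obtain ⟨w, hw⟩ := regular_mem_Rng f hf
    exact ⟨w, hw⟩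

/-! ### Injectivity -/

def Bmap (n : ℕ) : (((Fin (n+1) → ℂ) →ₗ[ℂ] ℂ) ⊗[ℂ] (Fin (n+1) → ℂ)) →ₗ[ℂ]
    Matrix (Fin (n+1)) (Fin (n+1)) ℂ :=
  TensorProduct.lift
    { toFun := fun φ =>
        { toFun := fun v => Matrix.of fun k l => φ (fun j => if k = j then 1 else 0) * v l
          map_add' := fun v w => by ext k l; simp [mul_add]
          map_smul' := fun c v => by ext k l; simp [Matrix.of_apply]; ring }
      map_add' := fun φ ψ => by ext v k l; simp [add_mul]
      map_smul' := fun c φ => by ext v k l; simp [Matrix.of_apply]; ring }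

lemma Bmap_tmul (n : ℕ) (φ : (Fin (n+1) → ℂ) →ₗ[ℂ] ℂ) (v : Fin (n+1) → ℂ) (k l : Fin (n+1)) :
    Bmap n (φ ⊗ₜ[ℂ] v) k l = φ (fun j => if k = j then 1 else 0) * v l := rfl

lemma Bmap_injective (n : ℕ) : Function.Injective (Bmap n) := by
  have hrel : ∀ z, Bmap n z = (LinearMap.toMatrix'
      ((dualTensorHomEquivOfBasis (N := Fin (n+1) → ℂ) (Pi.basisFun ℂ (Fin (n+1)))) z))ᵀ := by
    intro z
    induction z with
    | zero =>
      rw [(Bmap n).map_zero, LinearEquiv.map_zero, LinearEquiv.map_zero,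
        Matrix.transpose_zero]
    | tmul φ v =>
      ext k l
      rw [Bmap_tmul, Matrix.transpose_apply, dualTensorHomEquivOfBasis_apply,
        LinearMap.toMatrix'_apply, dualTensorHom_apply]
      simp only [Pi.smul_apply, smul_eq_mul]
      have harg : (fun j => if k = j then (1:ℂ) else 0) = (fun j' => if j' = k then 1 else 0) := by
        funext j
        simp [eq_comm]
      rw [harg, mul_comm]
      rw [mul_comm]; congr 2; funext j; simp [Pi.single_apply]
    | add z1 z2 h1 h2 =>
      rw [(Bmap n).map_add z1 z2, LinearEquiv.map_add, LinearEquiv.map_add,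
        Matrix.transpose_add, h1, h2]
  intro z1 z2 h
  rw [hrel z1, hrel z2] at h
  have h2 := congrArg Matrix.transpose h
  rw [Matrix.transpose_transpose, Matrix.transpose_transpose] at h2
  exact (dualTensorHomEquivOfBasis (Pi.basisFun ℂ (Fin (n+1)))).injective
    (LinearMap.toMatrix'.injective h2)

lemma Upsilon_of_matrix (n : ℕ) (z : ((Fin (n+1) → ℂ) →ₗ[ℂ] ℂ) ⊗[ℂ] (Fin (n+1) → ℂ)) (x : SL2) :
    Upsilon (DirectSum.of (fun m => ((Fin (m+1) → ℂ) →ₗ[ℂ] ℂ) ⊗[ℂ] (Fin (m+1) → ℂ)) n z) x =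
      ∑ k : Fin (n+1), ∑ l : Fin (n+1), rhoFun n x k l * Bmap n z k l := by
  induction z with
  | zero =>
    rw [map_zero, map_zero, map_zero]
    simp
  | tmul φ v =>
    rw [Upsilon_of_tmul, LinearMap.pi_apply_eq_sum_univ φ]
    refine Finset.sum_congr rfl fun k _ => ?_
    have hmv : ((rhoMat n x).mulVec v) k = ∑ l : Fin (n+1), rhoFun n x k l * v l := by
      simp [Matrix.mulVec, dotProduct, rhoMat]
    rw [smul_eq_mul, hmv, Finset.sum_mul]
    refine Finset.sum_congr rfl fun l _ => ?_
    rw [Bmap_tmul]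
    ring
  | add z1 z2 h1 h2 =>
    rw [map_add, map_add, map_add, Pi.add_apply, h1, h2, ← Finset.sum_add_distrib]
    refine Finset.sum_congr rfl fun k _ => ?_
    rw [← Finset.sum_add_distrib]
    refine Finset.sum_congr rfl fun l _ => ?_
    rw [Matrix.add_apply, mul_add]

def matL (v : ℂ) : SL2 := ⟨!![1, 0; v, 1], by simp [Matrix.det_fin_two_of]⟩
def matU (u : ℂ) : SL2 := ⟨!![1, u; 0, 1], by simp [Matrix.det_fin_two_of]⟩
def matD (t : ℂ) (ht : t ≠ 0) : SL2 :=
  ⟨!![t, 0; 0, t⁻¹], by simp [Matrix.det_fin_two_of]; exact mul_inv_cancel₀ ht⟩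

lemma rhoL (n l k : ℕ) (hl : l ≤ n) (hk : k ≤ n) (v : ℂ) :
    rhoFun n (matL v) l k = (k.choose l : ℂ) * v ^ (k - l) := by
  rw [rhoFun_formula n l k hl hk]
  have h00 : (matL v).1 0 0 = 1 := rfl
  have h10 : (matL v).1 1 0 = v := rfl
  have h01 : (matL v).1 0 1 = 0 := rfl
  have h11 : (matL v).1 1 1 = 1 := rfl
  rw [h00, h10, h01, h11]
  rw [Finset.sum_eq_single l]
  · rw [formF, Nat.sub_self, Nat.choose_zero_right]
    simp
  · intro i hi hne
    have hil : i < l := by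
      have := Finset.mem_range.1 hi
      omega
    rw [formF, zero_pow (by omega : l - i ≠ 0)]
    ring
  · intro h
    exact absurd (Finset.self_mem_range_succ l) h

lemma rhoU (n l k : ℕ) (hl : l ≤ n) (hk : k ≤ n) (u : ℂ) :
    rhoFun n (matU u) l k =
      if k ≤ l then ((n-k).choose (l-k) : ℂ) * u ^ (l - k) else 0 := by
  rw [rhoFun_formula n l k hl hk]
  have h00 : (matU u).1 0 0 = 1 := rfl
  have h10 : (matU u).1 1 0 = 0 := rfl
  have h01 : (matU u).1 0 1 = u := rfl
  have h11 : (matU u).1 1 1 = 1 := rfl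
  rw [h00, h10, h01, h11]
  by_cases hkl : k ≤ l
  · rw [if_pos hkl, Finset.sum_eq_single k]
    · rw [formF, Nat.sub_self, Nat.choose_self]
      simp
    · intro i hi hne
      rcases Nat.lt_or_ge i k with hik | hik
      · rw [formF, zero_pow (by omega : k - i ≠ 0)]
        ring
      · rw [formF, Nat.choose_eq_zero_of_lt (by omega)]
        push_cast
        ring
    · intro h
      exact absurd (Finset.mem_range.2 (by omega)) h
  · rw [if_neg hkl]
    refine Finset.sum_eq_zero fun i hi => ?_
    have : i ≤ l := Nat.lt_succ_iff.1 (Finset.mem_range.1 hi)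
    rw [formF, zero_pow (by omega : k - i ≠ 0)]
    ring

lemma rhoD (n l k : ℕ) (hl : l ≤ n) (hk : k ≤ n) (t : ℂ) (ht : t ≠ 0) :
    rhoFun n (matD t ht) l k = if l = k then t ^ l * t⁻¹ ^ (n - l) else 0 := by
  rw [rhoFun_formula n l k hl hk]
  have h00 : (matD t ht).1 0 0 = t := rfl
  have h10 : (matD t ht).1 1 0 = 0 := rfl
  have h01 : (matD t ht).1 0 1 = 0 := rfl
  have h11 : (matD t ht).1 1 1 = t⁻¹ := rfl
  rw [h00, h10, h01, h11]
  by_cases hlk : l = k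
  · subst hlk
    rw [if_pos rfl, Finset.sum_eq_single l]
    · rw [formF, Nat.sub_self, Nat.choose_self, Nat.choose_zero_right]
      simp
    · intro i hi hne
      have hil : i < l := by
        have := Finset.mem_range.1 hi
        omega
      rw [formF, zero_pow (by omega : l - i ≠ 0)]
      ring
    · intro h
      exact absurd (Finset.self_mem_range_succ l) h
  · rw [if_neg hlk]
    refine Finset.sum_eq_zero fun i hi => ?_
    have hil : i ≤ l := Nat.lt_succ_iff.1 (Finset.mem_range.1 hi)
    rcases lt_trichotomy i k with hik | hik | hik
    · rw [formF, zero_pow (by omega : k - i ≠ 0)]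
      ring
    · subst hik
      rw [formF, zero_pow (by omega : l - i ≠ 0)]
      ring
    · rw [formF, Nat.choose_eq_zero_of_lt hik]
      push_cast
      ring

lemma rho_LDU (n : ℕ) (v t u : ℂ) (ht : t ≠ 0) (k l : Fin (n+1)) :
    rhoFun n (matL v * matD t ht * matU u) (k:ℕ) (l:ℕ) =
      ∑ m ∈ range (n+1), (m.choose (k:ℕ) : ℂ) * v ^ (m - (k:ℕ)) * (t ^ m * t⁻¹ ^ (n - m)) *
        (if (l:ℕ) ≤ m then ((n-(l:ℕ)).choose (m-(l:ℕ)) : ℂ) * u ^ (m - (l:ℕ)) else 0) := by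
  have hk : (k:ℕ) ≤ n := Nat.lt_succ_iff.1 k.isLt
  have hl : (l:ℕ) ≤ n := Nat.lt_succ_iff.1 l.isLt
  have hmat : rhoFun n (matL v * matD t ht * matU u) (k:ℕ) (l:ℕ)
      = (rhoMat n (matL v) * rhoMat n (matD t ht) * rhoMat n (matU u)) k l := by
    rw [← rhoMat_mul, ← rhoMat_mul]
    rfl
  rw [hmat, Matrix.mul_apply, ← Fin.sum_univ_eq_sum_range]
  refine Finset.sum_congr rfl fun m _ => ?_
  have hm : (m:ℕ) ≤ n := Nat.lt_succ_iff.1 m.isLt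
  have hLD : (rhoMat n (matL v) * rhoMat n (matD t ht)) k m
      = ((m:ℕ).choose (k:ℕ) : ℂ) * v ^ ((m:ℕ) - (k:ℕ)) * (t ^ (m:ℕ) * t⁻¹ ^ (n - (m:ℕ))) := by
    rw [Matrix.mul_apply, Finset.sum_eq_single m]
    · show rhoFun n (matL v) (k:ℕ) (m:ℕ) * rhoFun n (matD t ht) (m:ℕ) (m:ℕ) = _
      rw [rhoL n k m hk hm, rhoD n m m hm hm t ht, if_pos rfl, mul_assoc]
    · intro b _ hbne
      show rhoFun n (matL v) (k:ℕ) (b:ℕ) * rhoFun n (matD t ht) (b:ℕ) (m:ℕ) = 0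
      rw [rhoD n b m (Nat.lt_succ_iff.1 b.isLt) hm t ht,
        if_neg (fun hc => hbne (Fin.ext hc)), mul_zero]
    · intro hc
      exact absurd (Finset.mem_univ m) hc
  rw [hLD]
  show _ * rhoFun n (matU u) (m:ℕ) (l:ℕ) = _
  rw [rhoU n m l hm hl]

def mon3 (α β γ : ℕ) : Fin 3 →₀ ℕ :=
  Finsupp.single 0 α + Finsupp.single 1 β + Finsupp.single 2 γ

lemma mon3_apply0 (α β γ : ℕ) : mon3 α β γ 0 = α := by simp [mon3]
lemma mon3_apply1 (α β γ : ℕ) : mon3 α β γ 1 = β := by simp [mon3]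
lemma mon3_apply2 (α β γ : ℕ) : mon3 α β γ 2 = γ := by simp [mon3]

lemma mon3_inj {α β γ α' β' γ' : ℕ} :
    mon3 α β γ = mon3 α' β' γ' ↔ (α = α' ∧ β = β' ∧ γ = γ') := by
  constructor
  · intro h
    refine ⟨?_, ?_, ?_⟩
    · rw [← mon3_apply0 α β γ, ← mon3_apply0 α' β' γ', h]
    · rw [← mon3_apply1 α β γ, ← mon3_apply1 α' β' γ', h]
    · rw [← mon3_apply2 α β γ, ← mon3_apply2 α' β' γ', h]
  · rintro ⟨h1, h2, h3⟩
    rw [h1, h2, h3]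

lemma eval_monomial_mon3 (α β γ : ℕ) (c v u t : ℂ) :
    MvPolynomial.eval ![v, u, t] (MvPolynomial.monomial (mon3 α β γ) c)
      = c * (v ^ α * u ^ β * t ^ γ) := by
  rw [MvPolynomial.eval_monomial]
  congr 1
  rw [Finsupp.prod_fintype _ _ (fun i => pow_zero _), Fin.prod_univ_three,
    mon3_apply0, mon3_apply1, mon3_apply2]
  simp only [Matrix.cons_val_zero, Matrix.cons_val_one, Matrix.head_cons,
    Matrix.cons_val_two, Matrix.tail_cons]

lemma tpow_eq {t : ℂ} (ht : t ≠ 0) {m n N : ℕ} (hm : m ≤ n) (hn : n ≤ N) :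
    t ^ m * t⁻¹ ^ (n - m) * t ^ N = t ^ (N - n + 2 * m) := by
  have key : t ^ (N - n + 2 * m) * t ^ (n - m) = t ^ m * t ^ N := by
    rw [← pow_add, ← pow_add]
    congr 1
    omega
  rw [inv_pow]
  field_simp
  linear_combination -key

def bigP (N : ℕ) (B : (n : ℕ) → Matrix (Fin (n+1)) (Fin (n+1)) ℂ) : MvPolynomial (Fin 3) ℂ :=
  ∑ n ∈ range (N+1), ∑ k : Fin (n+1), ∑ l : Fin (n+1), ∑ m ∈ range (n+1),
    MvPolynomial.monomial (mon3 (m - (k:ℕ)) (m - (l:ℕ)) ((N-n) + 2*m))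
      ((m.choose (k:ℕ) : ℂ) * (if (l:ℕ) ≤ m then ((n-(l:ℕ)).choose (m-(l:ℕ)) : ℂ) else 0)
        * B n k l)

lemma bigP_eval (N : ℕ) (B : (n : ℕ) → Matrix (Fin (n+1)) (Fin (n+1)) ℂ)
    (v u t : ℂ) (ht : t ≠ 0) :
    MvPolynomial.eval ![v,u,t] (bigP N B) =
      t^N * ∑ n ∈ range (N+1), ∑ k : Fin (n+1), ∑ l : Fin (n+1),
        rhoFun n (matL v * matD t ht * matU u) (k:ℕ) (l:ℕ) * B n k l := by
  rw [bigP, map_sum, Finset.mul_sum]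
  refine Finset.sum_congr rfl fun n hn => ?_
  have hnN : n ≤ N := Nat.lt_succ_iff.1 (Finset.mem_range.1 hn)
  rw [map_sum, Finset.mul_sum]
  refine Finset.sum_congr rfl fun k _ => ?_
  rw [map_sum, Finset.mul_sum]
  refine Finset.sum_congr rfl fun l _ => ?_
  rw [map_sum, rho_LDU n v t u ht k l, Finset.sum_mul, Finset.mul_sum]
  refine Finset.sum_congr rfl fun m hm => ?_
  have hmn : m ≤ n := Nat.lt_succ_iff.1 (Finset.mem_range.1 hm)
  rw [eval_monomial_mon3]
  by_cases hlm : (l:ℕ) ≤ m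
  · rw [if_pos hlm, if_pos hlm, ← tpow_eq ht hmn hnN]
    ring
  · rw [if_neg hlm, if_neg hlm]
    ring

lemma bigP_zero (N : ℕ) (B : (n : ℕ) → Matrix (Fin (n+1)) (Fin (n+1)) ℂ)
    (hB : ∀ x : SL2, (∑ n ∈ range (N+1), ∑ k : Fin (n+1), ∑ l : Fin (n+1),
      rhoFun n x (k:ℕ) (l:ℕ) * B n k l) = 0) : bigP N B = 0 := by
  have hX : (X 2 : MvPolynomial (Fin 3) ℂ) * bigP N B = 0 := by
    apply MvPolynomial.funext
    intro x
    rw [_root_.map_mul, MvPolynomial.eval_X, map_zero]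
    by_cases hx : x 2 = 0
    · rw [hx, zero_mul]
    · have hvec : x = ![x 0, x 1, x 2] := by
        funext i
        fin_cases i <;> rfl
      rw [hvec, bigP_eval N B (x 0) (x 1) (x 2) hx, hB, mul_zero, mul_zero]
  rcases mul_eq_zero.mp hX with h | h
  · exact absurd h (MvPolynomial.X_ne_zero 2)
  · exact h

lemma top_kill (N : ℕ) (B : (n : ℕ) → Matrix (Fin (n+1)) (Fin (n+1)) ℂ)
    (hB : ∀ x : SL2, (∑ n ∈ range (N+1), ∑ k : Fin (n+1), ∑ l : Fin (n+1),
      rhoFun n x (k:ℕ) (l:ℕ) * B n k l) = 0) : B N = 0 := by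
  ext k0 l0
  have hk0 : (k0:ℕ) ≤ N := Nat.lt_succ_iff.1 k0.isLt
  have hl0 : (l0:ℕ) ≤ N := Nat.lt_succ_iff.1 l0.isLt
  have hc := congrArg (MvPolynomial.coeff (mon3 (N - (k0:ℕ)) (N - (l0:ℕ)) (2*N)))
    (bigP_zero N B hB)
  rw [MvPolynomial.coeff_zero, bigP] at hc
  simp only [MvPolynomial.coeff_sum, MvPolynomial.coeff_monomial] at hc
  rw [Finset.sum_eq_single N] at hc
  rotate_left
  · intro n hn hne
    have hnN : n ≤ N := Nat.lt_succ_iff.1 (Finset.mem_range.1 hn)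
    refine Finset.sum_eq_zero fun k _ => Finset.sum_eq_zero fun l _ =>
      Finset.sum_eq_zero fun m hm => ?_
    have hmn : m ≤ n := Nat.lt_succ_iff.1 (Finset.mem_range.1 hm)
    rw [if_neg]
    intro hcon
    obtain ⟨h1, h2, h3⟩ := mon3_inj.mp hcon
    omega
  · intro h
    exact absurd (Finset.self_mem_range_succ N) h
  rw [Finset.sum_eq_single k0] at hc
  rotate_left
  · intro k _ hne
    have hkN : (k:ℕ) ≤ N := Nat.lt_succ_iff.1 k.isLt
    refine Finset.sum_eq_zero fun l _ => Finset.sum_eq_zero fun m hm => ?_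
    have hmn : m ≤ N := Nat.lt_succ_iff.1 (Finset.mem_range.1 hm)
    rw [if_neg]
    intro hcon
    obtain ⟨h1, h2, h3⟩ := mon3_inj.mp hcon
    exact hne (Fin.ext (by omega))
  · intro h
    exact absurd (Finset.mem_univ k0) h
  rw [Finset.sum_eq_single l0] at hc
  rotate_left
  · intro l _ hne
    have hlN : (l:ℕ) ≤ N := Nat.lt_succ_iff.1 l.isLt
    refine Finset.sum_eq_zero fun m hm => ?_
    have hmn : m ≤ N := Nat.lt_succ_iff.1 (Finset.mem_range.1 hm)
    rw [if_neg]
    intro hcon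
    obtain ⟨h1, h2, h3⟩ := mon3_inj.mp hcon
    exact hne (Fin.ext (by omega))
  · intro h
    exact absurd (Finset.mem_univ l0) h
  rw [Finset.sum_eq_single N] at hc
  rotate_left
  · intro m hm hne
    have hmn : m ≤ N := Nat.lt_succ_iff.1 (Finset.mem_range.1 hm)
    rw [if_neg]
    intro hcon
    obtain ⟨h1, h2, h3⟩ := mon3_inj.mp hcon
    omega
  · intro h
    exact absurd (Finset.self_mem_range_succ N) h
  rw [if_pos (mon3_inj.mpr ⟨rfl, rfl, by omega⟩), if_pos hl0, Nat.choose_self,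
    Nat.cast_one, mul_one] at hc
  have hnz : (N.choose (k0:ℕ) : ℂ) ≠ 0 := Nat.cast_ne_zero.2 (Nat.choose_pos hk0).ne'
  show B N k0 l0 = 0
  exact (mul_eq_zero.mp hc).resolve_left hnz

lemma indep_main : ∀ (N : ℕ) (B : (n : ℕ) → Matrix (Fin (n+1)) (Fin (n+1)) ℂ),
    (∀ x : SL2, (∑ n ∈ range (N+1), ∑ k : Fin (n+1), ∑ l : Fin (n+1),
      rhoFun n x (k:ℕ) (l:ℕ) * B n k l) = 0) → ∀ n ≤ N, B n = 0 := by
  intro N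
  induction N with
  | zero =>
    intro B hB n hn
    have hn0 : n = 0 := by omega
    subst hn0
    exact top_kill 0 B hB
  | succ N IH =>
    intro B hB n hn
    have htop : B (N+1) = 0 := top_kill (N+1) B hB
    by_cases hcase : n = N + 1
    · subst hcase
      exact htop
    · have hB' : ∀ x : SL2, (∑ n ∈ range (N+1), ∑ k : Fin (n+1), ∑ l : Fin (n+1),
          rhoFun n x (k:ℕ) (l:ℕ) * B n k l) = 0 := by
        intro x
        have hx := hB x
        rw [Finset.sum_range_succ] at hx
        have hz : (∑ k : Fin (N+1+1), ∑ l : Fin (N+1+1),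
            rhoFun (N+1) x (k:ℕ) (l:ℕ) * B (N+1) k l) = 0 := by
          refine Finset.sum_eq_zero fun k _ => Finset.sum_eq_zero fun l _ => ?_
          rw [htop, Matrix.zero_apply, mul_zero]
        rw [hz, add_zero] at hx
        exact hx
      exact IH B hB' n (by omega)

lemma Upsilon_ker (w : ⨁ n : ℕ, (((Fin (n+1) → ℂ) →ₗ[ℂ] ℂ) ⊗[ℂ] (Fin (n+1) → ℂ)))
    (hw : Upsilon w = 0) : w = 0 := by
  classical
  obtain ⟨N, hsupp⟩ : ∃ N, ∀ n ∈ DFinsupp.support w, n ≤ N :=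
    ⟨(DFinsupp.support w).sup id, fun n hn => Finset.le_sup (f := id) hn⟩
  have hrepr : ∀ x : SL2, (∑ n ∈ range (N+1), ∑ k : Fin (n+1), ∑ l : Fin (n+1),
      rhoFun n x (k:ℕ) (l:ℕ) * (Bmap n (w n)) k l) = 0 := by
    intro x
    have h1 : Upsilon w x = ∑ n ∈ range (N+1), ∑ k : Fin (n+1), ∑ l : Fin (n+1),
        rhoFun n x (k:ℕ) (l:ℕ) * (Bmap n (w n)) k l := by
      conv_lhs => rw [← DirectSum.sum_support_of w]
      rw [map_sum, Finset.sum_apply]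
      rw [Finset.sum_subset
        (fun n hn => Finset.mem_range.2 (Nat.lt_succ_of_le (hsupp n hn)))]
      · exact Finset.sum_congr rfl fun n _ => Upsilon_of_matrix n (w n) x
      · intro n _ hn2
        have hwn : w n = 0 := DFinsupp.notMem_support_iff.1 hn2
        rw [hwn, map_zero, map_zero]
        rfl
    rw [← h1, hw]
    rfl
  have hzero := indep_main N (fun n => Bmap n (w n)) hrepr
  apply DFinsupp.ext
  intro n
  show w n = 0
  by_cases hn : n ≤ N
  · apply Bmap_injective n
    rw [map_zero]
    exact hzero n hn
  · by_contra hne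
    exact hn (hsupp n (DFinsupp.mem_support_iff.2 hne))

lemma Upsilon_injective : Function.Injective ⇑Upsilon := by
  intro a b hab
  have h : Upsilon (a - b) = 0 := by rw [map_sub, hab, sub_self]
  exact sub_eq_zero.1 (Upsilon_ker _ h)

theorem upsilon_bijective_equivariant :
    Function.Injective ⇑Upsilon ∧
    Set.range ⇑Upsilon = {f : SL2 → ℂ | IsRegularFn f} ∧
    ∀ (n : ℕ) (g : SL2) (φ : (Fin (n+1) → ℂ) →ₗ[ℂ] ℂ) (v : Fin (n+1) → ℂ) (x : SL2),
      Upsilon (DirectSum.of (fun m => ((Fin (m+1) → ℂ) →ₗ[ℂ] ℂ) ⊗[ℂ] (Fin (m+1) → ℂ)) n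
          ((φ.comp (Matrix.mulVecLin (rhoMat n g)⁻¹)) ⊗ₜ[ℂ] ((rhoMat n g).mulVec v))) x =
        Upsilon (DirectSum.of (fun m => ((Fin (m+1) → ℂ) →ₗ[ℂ] ℂ) ⊗[ℂ] (Fin (m+1) → ℂ)) n
          (φ ⊗ₜ[ℂ] v)) (g⁻¹ * x * g) :=
  ⟨Upsilon_injective, range_Upsilon_eq, fun n g φ v x => equivariance n g φ v x⟩

end
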